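/- There is no continuously differentiable function P on the unit circle 𝕋 such that P(z)² − 2zP(z) − 1 = 0 for all z ∈ 𝕋. -/

import Mathlib

set_option linter.unnecessarySimpa false
set_option linter.unusedTactic false


open Complex

/-- There is no `P ∈ C¹(𝕋)` such that `P(z)² − 2zP(z) − 1 = 0` for all `z ∈ 𝕋`. -/
theorem no_C1_solution_riccati :
    ¬ ∃ P : ℂ → ℂ,
      ContDiff ℝ 1 (fun θ : ℝ => P (Complex.exp (θ * Complex.I))) ∧
      ∀ z : ℂ, ‖z‖ = 1 → (P z) ^ 2 - 2 * z * P z - 1 = 0 := by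
  rintro ⟨P, hP, heq⟩
  set u : ℝ → ℂ := fun θ : ℝ => P (Complex.exp (θ * Complex.I)) with hu
  set f : ℝ → ℂ := fun θ : ℝ => u θ - Complex.exp (θ * Complex.I) with hf
  have hnorm : ∀ θ : ℝ, ‖Complex.exp (θ * Complex.I)‖ = 1 := fun θ => by
    simpa using Complex.abs_exp_ofReal_mul_I θ
  have hf2 : ∀ θ : ℝ, f θ * f θ =
      Complex.exp (θ * Complex.I) * Complex.exp (θ * Complex.I) + 1 := by
    intro θ
    have h := heq _ (hnorm θ)
    simp only [hf, hu]
    linear_combination h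
  set θ0 : ℝ := Real.pi / 2 with hθ0
  have hexp : Complex.exp ((θ0 : ℂ) * Complex.I) = Complex.I := by
    rw [Complex.exp_mul_I]
    push_cast
    rw [← Complex.ofReal_cos, ← Complex.ofReal_sin]
    simp [hθ0]
  have hf0 : f θ0 = 0 := by
    have := hf2 θ0
    rw [hexp] at this
    have h0 : f θ0 * f θ0 = 0 := by rw [this]; ring_nf; simp [Complex.I_mul_I]
    exact mul_self_eq_zero.mp h0
  -- derivative of θ ↦ exp(θ i)
  have hE : HasDerivAt (fun θ : ℝ => Complex.exp ((θ : ℂ) * Complex.I))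
      (Complex.exp ((θ0 : ℂ) * Complex.I) * (1 * Complex.I)) θ0 := by
    have h1 : HasDerivAt (fun θ : ℝ => (θ : ℂ)) 1 θ0 := by
      exact Complex.ofRealCLM.hasDerivAt (x := θ0)
    exact (h1.mul_const Complex.I).cexp
  have hU : DifferentiableAt ℝ u θ0 := (hP.differentiable one_ne_zero).differentiableAt
  have hF : HasDerivAt f (deriv u θ0 - Complex.exp ((θ0 : ℂ) * Complex.I) * (1 * Complex.I))
      θ0 := hU.hasDerivAt.sub hE
  have hG1 : HasDerivAt (fun θ : ℝ => f θ * f θ)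
      ((deriv u θ0 - Complex.exp ((θ0 : ℂ) * Complex.I) * (1 * Complex.I)) * f θ0 +
        f θ0 * (deriv u θ0 - Complex.exp ((θ0 : ℂ) * Complex.I) * (1 * Complex.I))) θ0 :=
    hF.mul hF
  have hfun : (fun θ : ℝ => f θ * f θ) =
      fun θ : ℝ => Complex.exp ((θ : ℂ) * Complex.I) * Complex.exp ((θ : ℂ) * Complex.I) + 1 :=
    funext fun θ => hf2 θ
  have hG2 : HasDerivAt (fun θ : ℝ => f θ * f θ)
      (Complex.exp ((θ0 : ℂ) * Complex.I) * (1 * Complex.I) * Complex.exp ((θ0 : ℂ) * Complex.I) +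
        Complex.exp ((θ0 : ℂ) * Complex.I) *
          (Complex.exp ((θ0 : ℂ) * Complex.I) * (1 * Complex.I))) θ0 := by
    rw [hfun]
    exact (hE.mul hE).add_const 1
  have huniq := hG1.unique hG2
  rw [hf0, hexp] at huniq
  simp [Complex.I_mul_I] at huniq
  -- huniq should now say 0 = -2 * I or similar; derive contradiction
  exact absurd huniq (by norm_num [Complex.ext_iff])
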